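/- Let n ≥ 2, π/3 ≤ θ ≤ π, and R = 1/sin(θ/2). Let g : [−1,1] → ℝ be continuous with g(t) ≤ 0 for all t ∈ [−1, cos θ]. For x, y ∈ ℝ^n define F(x,y) = ∫_{B_R(x) ∩ B_R(y)} g(⟨(x−z)/|x−z|, (y−z)/|y−z|⟩) dz. Then F(x,y) ≤ 0 whenever |x−y| ≥ 2. -/

import Mathlib

open MeasureTheory Metric Real
open scoped BigOperators

set_option maxHeartbeats 1000000 in
theorem kernel_nonpos_of_dist_ge_two
    (n : ℕ) (hn : 2 ≤ n) (θ : ℝ) (hθ1 : π / 3 ≤ θ) (hθ2 : θ ≤ π)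
    (R : ℝ) (hR : R = 1 / Real.sin (θ / 2))
    (g : ℝ → ℝ) (hg_cont : ContinuousOn g (Set.Icc (-1) 1))
    (hg_neg : ∀ t ∈ Set.Icc (-1 : ℝ) (Real.cos θ), g t ≤ 0)
    (F : EuclideanSpace ℝ (Fin n) → EuclideanSpace ℝ (Fin n) → ℝ)
    (hF : ∀ x y, F x y = ∫ z in closedBall x R ∩ closedBall y R,
      g (inner ℝ (‖x - z‖⁻¹ • (x - z)) (‖y - z‖⁻¹ • (y - z))))
    (x y : EuclideanSpace ℝ (Fin n)) (hxy : 2 ≤ ‖x - y‖) :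
    F x y ≤ 0 := by
  have hπ : (0:ℝ) < π := Real.pi_pos
  have hshalf : (1/2 : ℝ) ≤ Real.sin (θ/2) := by
    have := Real.sin_le_sin_of_le_of_le_pi_div_two (x := π/6) (y := θ/2)
      (by linarith) (by linarith) (by linarith)
    rwa [Real.sin_pi_div_six] at this
  have hspos : 0 < Real.sin (θ/2) := by linarith
  have hRs : R * Real.sin (θ/2) = 1 := by
    rw [hR]; field_simp
  have hcosθ : Real.cos θ = 1 - 2 * Real.sin (θ/2)^2 := by
    have h := Real.cos_two_mul' (θ/2)
    rw [show 2*(θ/2) = θ by ring] at h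
    nlinarith [Real.sin_sq_add_cos_sq (θ/2)]
  rw [hF]
  set S := closedBall x R ∩ closedBall y R with hS
  apply integral_nonpos_of_ae
  have h0 : (volume : Measure (EuclideanSpace ℝ (Fin n))) ({x, y} : Set _) = 0 := by
    haveI : Nontrivial (EuclideanSpace ℝ (Fin n)) := by
      refine nontrivial_of_ne (EuclideanSpace.single ⟨0, by omega⟩ (1:ℝ)) 0 ?_
      intro h
      have := congrArg (fun f : EuclideanSpace ℝ (Fin n) => f ⟨0, by omega⟩) h
      simp [EuclideanSpace.single] at this
    exact (Set.toFinite ({x, y} : Set _)).measure_zero _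
  have hae : ∀ᵐ z ∂(volume.restrict S), z ∉ ({x, y} : Set (EuclideanSpace ℝ (Fin n))) :=
    ae_restrict_of_ae (compl_mem_ae_iff.mpr h0)
  have hmem : ∀ᵐ z ∂(volume.restrict S), z ∈ S :=
    ae_restrict_mem (by
      exact (measurableSet_closedBall).inter measurableSet_closedBall)
  filter_upwards [hae, hmem] with z hz hzS
  simp only [Set.mem_insert_iff, Set.mem_singleton_iff, not_or] at hz
  obtain ⟨hzx, hzy⟩ := hz
  obtain ⟨hzx', hzy'⟩ := hzS
  have ha : 0 < ‖x - z‖ := by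
    rw [norm_pos_iff, sub_ne_zero]; exact fun h => hzx h.symm
  have hb : 0 < ‖y - z‖ := by
    rw [norm_pos_iff, sub_ne_zero]; exact fun h => hzy h.symm
  have haR : ‖x - z‖ ≤ R := by
    rw [mem_closedBall, dist_comm, dist_eq_norm] at hzx'; exact hzx'
  have hbR : ‖y - z‖ ≤ R := by
    rw [mem_closedBall, dist_comm, dist_eq_norm] at hzy'; exact hzy'
  set u : EuclideanSpace ℝ (Fin n) := ‖x - z‖⁻¹ • (x - z)
  set v : EuclideanSpace ℝ (Fin n) := ‖y - z‖⁻¹ • (y - z)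
  have hu : ‖u‖ = 1 := by
    simp [u, norm_smul, abs_of_pos (inv_pos.2 ha), inv_mul_cancel₀ ha.ne']
  have hv : ‖v‖ = 1 := by
    simp [v, norm_smul, abs_of_pos (inv_pos.2 hb), inv_mul_cancel₀ hb.ne']
  apply hg_neg
  constructor
  · have := abs_real_inner_le_norm u v
    rw [hu, hv, mul_one] at this
    linarith [neg_abs_le (inner ℝ u v : ℝ)]
  · -- inner u v ≤ cos θ
    have hip : (inner ℝ u v : ℝ) = (‖x - z‖ * ‖y - z‖)⁻¹ * inner ℝ (x - z) (y - z) := by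
      simp only [u, v, real_inner_smul_left, real_inner_smul_right, mul_inv]
      ring
    have hlaw : ‖x - y‖^2 = ‖x - z‖^2 + ‖y - z‖^2 - 2 * inner ℝ (x - z) (y - z) := by
      have : x - y = (x - z) - (y - z) := by abel
      rw [this, @norm_sub_sq_real]
      ring
    set a := ‖x - z‖
    set b := ‖y - z‖
    set c := ‖x - y‖
    set s := Real.sin (θ/2) with hsdef
    have key : a^2 + b^2 - c^2 ≤ 2 * a * b * Real.cos θ := by
      have hc2 : (4:ℝ) ≤ c^2 := by nlinarith
      have hR2s : R^2 * s^2 = 1 := by nlinarith [hRs]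
      have hRab : 0 ≤ R^2 - a*b := by
        nlinarith [mul_nonneg (by linarith : (0:ℝ) ≤ R) (sub_nonneg.2 haR),
          mul_nonneg ha.le (sub_nonneg.2 hbR)]
      have h4s : 0 ≤ 4*s^2 - 1 := by nlinarith
      have hmul : 0 ≤ (4*s^2 - 1) * (R^2 - a*b) := mul_nonneg h4s hRab
      have hE : 0 ≤ (R - a)*(R + a - b) := mul_nonneg (by linarith) (by linarith)
      have hE2 : 0 ≤ (R - b)*b := mul_nonneg (by linarith) hb.le
      nlinarith [hc2, hmul, hE, hE2, hR2s]
    have hab : 0 < a * b := mul_pos ha hb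
    have hI : (inner ℝ (x - z) (y - z) : ℝ) ≤ a * b * Real.cos θ := by linarith
    rw [hip]
    calc (a*b)⁻¹ * (inner ℝ (x - z) (y - z) : ℝ)
        ≤ (a*b)⁻¹ * (a * b * Real.cos θ) :=
          mul_le_mul_of_nonneg_left hI (inv_nonneg.2 hab.le)
      _ = Real.cos θ := by field_simp
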